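/- Let T be a symmetric bilinear form on a real vector space V equipped with a symmetric bilinear form g of Lorentzian signature. If T(v,v) ≥ 0 for all v with g(v,v) = -1 and T(e₀,e₀) = 0 for some e₀ with g(e₀,e₀) = -1, then T(e₀,w) = 0 for every w with g(e₀,w) = 0. -/
import Mathlib


/-- If a symmetric bilinear form `T` on a Lorentzian vector space `(V, g)`
satisfies `T(v,v) ≥ 0` for all unit timelike `v` and vanishes on some unit timelike `e₀`,
then `T(e₀, w) = 0` for every `w` orthogonal to `e₀`.  The Lorentzian signature is
encoded by positive-definiteness of `g` on the orthogonal complement of the unit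
timelike vector `e₀`. -/
theorem stmt0 {V : Type*} [AddCommGroup V] [Module ℝ V]
    (g T : V →ₗ[ℝ] V →ₗ[ℝ] ℝ)
    (hgsymm : ∀ v w, g v w = g w v)
    (hTsymm : ∀ v w, T v w = T w v)
    (e₀ : V) (he₀ : g e₀ e₀ = -1)
    (hpos : ∀ w, g e₀ w = 0 → w ≠ 0 → 0 < g w w)
    (hnn : ∀ v, g v v = -1 → 0 ≤ T v v)
    (hT0 : T e₀ e₀ = 0) :
    ∀ w, g e₀ w = 0 → T e₀ w = 0 := by
  intro w hw
  by_cases hw0 : w = 0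
  · simp [hw0]
  set c := g w w with hc
  have hcpos : 0 < c := hpos w hw hw0
  set a := T e₀ w with ha
  set b := T w w with hb
  -- key inequality for all s
  have key : ∀ s : ℝ, 0 ≤ 2 * s * Real.sqrt (1 + c * s ^ 2) * a + s ^ 2 * b := by
    intro s
    have h1 : (0:ℝ) ≤ 1 + c * s ^ 2 := by positivity
    set r := Real.sqrt (1 + c * s ^ 2) with hr
    have hr2 : r ^ 2 = 1 + c * s ^ 2 := Real.sq_sqrt h1
    set v := r • e₀ + s • w with hv
    have hgvv : g v v = -1 := by
      simp only [hv, map_add, map_smul, LinearMap.add_apply, LinearMap.smul_apply,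
        smul_eq_mul]
      rw [he₀, hgsymm w e₀, hw, ← hc]
      nlinarith [hr2]
    have := hnn v hgvv
    have hTvv : T v v = 2 * s * r * a + s ^ 2 * b := by
      simp only [hv, map_add, map_smul, LinearMap.add_apply, LinearMap.smul_apply,
        smul_eq_mul]
      rw [hT0, hTsymm w e₀, ← ha, ← hb]
      ring
    linarith [hTvv ▸ this]
  by_contra hne
  have haa : 0 < a ^ 2 := by positivity
  set ε := 1 / (|b| + 1) with hε
  have hεpos : 0 < ε := by positivity
  have hεb : ε * b < 1 := by
    rw [hε]
    rw [div_mul_eq_mul_div, one_mul, div_lt_one (by positivity)]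
    calc b ≤ |b| := le_abs_self b
    _ < |b| + 1 := by linarith
  set s := -a * ε with hs
  have hk := key s
  have hrge : 1 ≤ Real.sqrt (1 + c * s ^ 2) := by
    nlinarith [Real.sq_sqrt (show (0:ℝ) ≤ 1 + c * s ^ 2 by positivity),
      Real.sqrt_nonneg (1 + c * s ^ 2), sq_nonneg s, hcpos]
  set r := Real.sqrt (1 + c * s ^ 2) with hrr
  have h2 : 2 * s * r * a + s ^ 2 * b = a ^ 2 * ε * (-2 * r + ε * b) := by
    rw [hs]; ring
  rw [h2] at hk
  have : 0 ≤ -2 * r + ε * b := nonneg_of_mul_nonneg_right hk (by positivity)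
  nlinarith
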